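/- Let H be a real Hilbert space, let I be a countable index set, and for each i ∈ I let T_i : H → H be a cutter with C_i := Fix T_i and C := ⋂_{i ∈ I} C_i. Let Q ⊆ H be nonempty, closed and convex. Consider the method x_0 ∈ Q, x_{k+1} := P_Q( x_k + α_{[k]} Σ_{i ∈ I_k(x_k)} λ_{i,k}(x_k) β_{i,k}(x_k)(T_i(x_k) − x_k) ) with φ_i(x) := 1 for all i and x, where [k] := #{0 ≤ n ≤ k−1 : x_n ≠ x_{n+1}} and β_{i,k}(x) := (r_{[k]} + ‖T_i(x) − x‖)/‖T_i(x) − x‖ if T_i(x) ≠ x and 0 otherwise. Assume (i) int(C) ∩ Q ≠ ∅; (ii) r_k → 0 and Σ_{k=0}^∞ α_k r_k = ∞ with α_k ∈ (0,2]; (iv) λ_{i,k}(x) ≥ λ > 0 for all x, k and i ∈ I_k(x) ∩ I_+(x), with Σ_{i ∈ I_k(x)} λ_{i,k}(x) = 1; (v) the control sequence {I_k} (with sup_{x,k} #(I_k(x)) < ∞) is well matched with C. Then the sequence {x_k} is bounded, and consequently x_k ∈ C ∩ Q for some k. -/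

import Mathlib

open scoped RealInnerProductSpace Classical

lemma stmt12_step {H : Type*} [NormedAddCommGroup H] [InnerProductSpace ℝ H] {I : Type*}
    (T : I → H → H)
    (hT : ∀ i, ∀ x z, T i z = z → ⟪x - T i x, z - T i x⟫ ≤ 0)
    (z u : H) (ρ rr aa lam0 : ℝ)
    (hρpos : 0 < ρ)
    (hball : ∀ y ∈ Metric.closedBall z ρ, ∀ i, T i y = y)
    (hrr : 0 < rr) (haa : 0 < aa) (haa2 : aa ≤ 2) (hlam0 : 0 < lam0)
    (S : Finset I) (lam : I → ℝ)
    (hlamnn : ∀ i ∈ S, 0 ≤ lam i) (hlamsum : ∑ i ∈ S, lam i = 1)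
    (hlamlb : ∀ i ∈ S, T i u ≠ u → lam0 ≤ lam i)
    (i0 : I) (hi0S : i0 ∈ S) (hi0 : T i0 u ≠ u)
    (w : H)
    (hw : w = ∑ i ∈ S,
      (lam i * if T i u ≠ u then (rr + ‖T i u - u‖) / ‖T i u - u‖ else 0) • (T i u - u)) :
    0 < ⟪w, z - u⟫ ∧ (rr ≤ ρ / 2 →
      ‖(u + aa • w) - z‖ ^ 2 ≤ ‖u - z‖ ^ 2 - aa * (ρ * (lam0 * rr))) := by
  classical
  -- cutter geometry
  have hcut : ∀ i, T i u ≠ u →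
      ‖T i u - u‖ * (‖T i u - u‖ + ρ) ≤ ⟪T i u - u, z - u⟫ := by
    intro i hne
    set v := T i u - u with hv
    have hd : 0 < ‖v‖ := by rw [norm_pos_iff]; exact sub_ne_zero.2 hne
    set z' := z - (ρ / ‖v‖) • v with hz'
    have hz'mem : z' ∈ Metric.closedBall z ρ := by
      rw [Metric.mem_closedBall, dist_eq_norm, hz']
      have h5 : z - (ρ / ‖v‖) • v - z = -((ρ / ‖v‖) • v) := by abel
      rw [h5, norm_neg, norm_smul, Real.norm_eq_abs, abs_of_nonneg (by positivity)]
      rw [div_mul_cancel₀ _ (ne_of_gt hd)]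
    have h0 := hT i u z' (hball z' hz'mem i)
    have he1 : u - T i u = -v := by rw [hv]; abel
    have he2 : z' - T i u = (z - u) - (ρ / ‖v‖) • v - v := by rw [hz', hv]; abel
    rw [he1, he2, inner_neg_left, inner_sub_right, inner_sub_right, real_inner_smul_right,
      real_inner_self_eq_norm_sq] at h0
    have hρv : ρ / ‖v‖ * ‖v‖ ^ 2 = ρ * ‖v‖ := by field_simp
    nlinarith [h0]
  set d : I → ℝ := fun i => ‖T i u - u‖ with hd
  set b : I → ℝ := fun i => if T i u ≠ u then rr + d i else 0 with hb
  have hdnn : ∀ i, 0 ≤ d i := fun i => norm_nonneg _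
  have hdeq : ∀ i, d i = ‖T i u - u‖ := fun i => rfl
  have hbeq : ∀ i, T i u ≠ u → b i = rr + d i := by
    intro i h
    simp only [hb]
    rw [if_pos h]
  have hbeq0 : ∀ i, T i u = u → b i = 0 := by
    intro i h
    simp only [hb]
    rw [if_neg (by simpa using h)]
  have hbnn : ∀ i, 0 ≤ b i := by
    intro i
    by_cases h : T i u = u
    · rw [hbeq0 i h]
    · rw [hbeq i h]; have := hdnn i; linarith
  -- F1 : norms of summands
  have F1 : ∀ i ∈ S, ‖(lam i * if T i u ≠ u then (rr + ‖T i u - u‖) / ‖T i u - u‖ else 0)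
      • (T i u - u)‖ = lam i * b i := by
    intro i hi
    by_cases h : T i u = u
    · rw [hbeq0 i h]
      simp [h]
    · have hdi : (0:ℝ) < ‖T i u - u‖ := by rw [norm_pos_iff]; exact sub_ne_zero.2 h
      have h1 : (0:ℝ) ≤ rr + ‖T i u - u‖ := by linarith
      have hco : (0:ℝ) ≤ lam i * ((rr + ‖T i u - u‖) / ‖T i u - u‖) :=
        mul_nonneg (hlamnn i hi) (div_nonneg h1 (norm_nonneg _))
      rw [if_pos h, norm_smul, Real.norm_eq_abs, abs_of_nonneg hco, hbeq i h, hdeq i]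
      field_simp
  -- F2 : inner products of summands
  have F2 : ∀ i ∈ S, lam i * (b i * (d i + ρ)) ≤
      ⟪(lam i * if T i u ≠ u then (rr + ‖T i u - u‖) / ‖T i u - u‖ else 0)
        • (T i u - u), z - u⟫ := by
    intro i hi
    by_cases h : T i u = u
    · rw [hbeq0 i h]
      simp [h]
    · have hdi : (0:ℝ) < ‖T i u - u‖ := by rw [norm_pos_iff]; exact sub_ne_zero.2 h
      rw [if_pos h, real_inner_smul_left]
      have hco : (0:ℝ) ≤ lam i * ((rr + ‖T i u - u‖) / ‖T i u - u‖) := by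
        have h1 : (0:ℝ) ≤ rr + ‖T i u - u‖ := by linarith
        exact mul_nonneg (hlamnn i hi) (div_nonneg h1 (norm_nonneg _))
      have hmul := mul_le_mul_of_nonneg_left (hcut i h) hco
      refine le_trans (le_of_eq ?_) hmul
      rw [hbeq i h, hdeq i]
      field_simp
  -- inner product bound
  have hP : (∑ i ∈ S, lam i * (b i * (d i + ρ))) ≤ ⟪w, z - u⟫ := by
    rw [hw, sum_inner]
    exact Finset.sum_le_sum F2
  have hPpos : 0 < ∑ i ∈ S, lam i * (b i * (d i + ρ)) := by
    apply Finset.sum_pos'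
    · intro i hi
      exact mul_nonneg (hlamnn i hi) (mul_nonneg (hbnn i)
        (by have := hdnn i; linarith))
    · refine ⟨i0, hi0S, ?_⟩
      have hb0 : b i0 = rr + d i0 := hbeq i0 hi0
      have hl := hlamlb i0 hi0S hi0
      have hdn := hdnn i0
      rw [hb0]
      exact mul_pos (lt_of_lt_of_le hlam0 hl) (mul_pos (by linarith) (by linarith))
  constructor
  · exact lt_of_lt_of_le hPpos hP
  intro hrle
  -- norm bound
  have hwnorm : ‖w‖ ≤ ∑ i ∈ S, lam i * b i := by
    rw [hw]
    refine le_trans (norm_sum_le _ _) ?_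
    exact le_of_eq (Finset.sum_congr rfl F1)
  have hsnn : 0 ≤ ∑ i ∈ S, lam i * b i := by
    apply Finset.sum_nonneg
    intro i hi
    exact mul_nonneg (hlamnn i hi) (hbnn i)
  have hY : (∑ i ∈ S, lam i * b i) ^ 2 ≤ ∑ i ∈ S, lam i * b i ^ 2 := by
    have := Finset.sum_sq_le_sum_mul_sum_of_sq_eq_mul S
      (f := fun i => lam i) (g := fun i => lam i * b i ^ 2) (r := fun i => lam i * b i)
      hlamnn (fun i hi => mul_nonneg (hlamnn i hi) (sq_nonneg _))
      (fun i hi => by ring)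
    rwa [hlamsum, one_mul] at this
  -- per-index decrease
  have hdec : ∀ i ∈ S, lam i * (aa * b i ^ 2) ≤ lam i * (2 * (b i * (d i + ρ))) - lam i * (ρ * b i) := by
    intro i hi
    by_cases h : T i u = u
    · rw [hbeq0 i h]
      simp
    · have hb0 : b i = rr + d i := by rw [hb]; dsimp only; rw [if_pos h]
      have hl := hlamnn i hi
      have hdn := hdnn i
      have key : aa * b i ^ 2 ≤ 2 * (b i * (d i + ρ)) - ρ * b i := by
        rw [hb0]
        nlinarith [hdnn i]
      nlinarith [mul_le_mul_of_nonneg_left key hl]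
  have hsum_dec : aa * (∑ i ∈ S, lam i * b i ^ 2) ≤
      2 * (∑ i ∈ S, lam i * (b i * (d i + ρ))) - ρ * (∑ i ∈ S, lam i * b i) := by
    have hsl := Finset.sum_le_sum hdec
    rw [Finset.sum_sub_distrib] at hsl
    have e1 : ∑ i ∈ S, lam i * (aa * b i ^ 2) = aa * ∑ i ∈ S, lam i * b i ^ 2 := by
      rw [Finset.mul_sum]; exact Finset.sum_congr rfl fun i _ => by ring
    have e2 : ∑ i ∈ S, lam i * (2 * (b i * (d i + ρ))) = 2 * ∑ i ∈ S, lam i * (b i * (d i + ρ)) := by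
      rw [Finset.mul_sum]; exact Finset.sum_congr rfl fun i _ => by ring
    have e3 : ∑ i ∈ S, lam i * (ρ * b i) = ρ * ∑ i ∈ S, lam i * b i := by
      rw [Finset.mul_sum]; exact Finset.sum_congr rfl fun i _ => by ring
    rw [e1, e2, e3] at hsl
    exact hsl
  -- lower bound on s
  have hslb : lam0 * rr ≤ ∑ i ∈ S, lam i * b i := by
    have hterm : lam0 * rr ≤ lam i0 * b i0 := by
      have hb0 : b i0 = rr + d i0 := hbeq i0 hi0
      have hl := hlamlb i0 hi0S hi0
      have := hdnn i0
      rw [hb0]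
      nlinarith
    refine le_trans hterm (Finset.single_le_sum (f := fun i => lam i * b i) ?_ hi0S)
    intro i hi
    exact mul_nonneg (hlamnn i hi) (hbnn i)
  -- expand the square
  have hexp : ‖(u + aa • w) - z‖ ^ 2 = ‖u - z‖ ^ 2 + 2 * (aa * ⟪w, u - z⟫) + aa ^ 2 * ‖w‖ ^ 2 := by
    have h3 : (u + aa • w) - z = (u - z) + aa • w := by abel
    rw [h3, norm_add_sq_real, real_inner_smul_right, norm_smul, Real.norm_eq_abs,
      abs_of_pos haa, mul_pow, real_inner_comm]
  have hinner : ⟪w, u - z⟫ = - ⟪w, z - u⟫ := by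
    have : u - z = -(z - u) := by abel
    rw [this, inner_neg_right]
  have hw2 : ‖w‖ ^ 2 ≤ ∑ i ∈ S, lam i * b i ^ 2 :=
    le_trans (by nlinarith [norm_nonneg w, hwnorm, hsnn]) hY
  rw [hexp, hinner]
  have hP' := hP
  nlinarith [mul_le_mul_of_nonneg_left hsum_dec (le_of_lt haa),
    mul_le_mul_of_nonneg_left hslb (mul_pos haa hρpos).le,
    mul_le_mul_of_nonneg_left hP' (mul_pos haa (by norm_num : (0:ℝ) < 2)).le,
    mul_le_mul_of_nonneg_left hw2 (sq_nonneg aa)]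


/-- Example 4.8 (`φ_i ≡ 1`): under conditions (i), (ii), (iv), (v), the sequence generated
by the overrelaxed method with `φ_i(x) := 1` is bounded and reaches `C ∩ Q` in finitely
many steps. -/
theorem stmt12 {H : Type*} [NormedAddCommGroup H] [InnerProductSpace ℝ H] [CompleteSpace H]
    {I : Type*} [Countable I]
    (T : I → H → H)
    (hfixne : ∀ i, ∃ z, T i z = z)
    (hT : ∀ i, ∀ x z, T i z = z → ⟪x - T i x, z - T i x⟫ ≤ 0)
    (Q : Set H) (hQne : Q.Nonempty) (hQclosed : IsClosed Q) (hQconvex : Convex ℝ Q)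
    (PQ : H → H) (hPQmem : ∀ u, PQ u ∈ Q)
    (hPQmin : ∀ u, ∀ w ∈ Q, ‖PQ u - u‖ ≤ ‖w - u‖)
    -- the control sequence
    (Ik : ℕ → H → Finset I) (hIkne : ∀ k u, (Ik k u).Nonempty)
    (M : ℕ) (hIkM : ∀ k u, (Ik k u).card ≤ M)
    -- the weights
    (lam : I → ℕ → H → ℝ) (hlam01 : ∀ i k u, 0 ≤ lam i k u ∧ lam i k u ≤ 1)
    (hlamsum : ∀ k u, ∑ i ∈ Ik k u, lam i k u = 1)
    -- relaxations and overrelaxations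
    (α : ℕ → ℝ) (hα : ∀ k, 0 < α k ∧ α k ≤ 2)
    (r : ℕ → ℝ) (hrpos : ∀ k, 0 < r k)
    -- the iterates and the correction-step counter
    (x : ℕ → H) (cnt : ℕ → ℕ)
    (hcnt0 : cnt 0 = 0)
    (hcnt : ∀ k, cnt k = ((Finset.range k).filter (fun n => x n ≠ x (n + 1))).card)
    (hx0 : x 0 ∈ Q)
    (hxrec : ∀ k, x (k + 1) = PQ (x k + α (cnt k) •
      ∑ i ∈ Ik k (x k),
        (lam i k (x k) *
          if T i (x k) ≠ x k then
            (r (cnt k) + ‖T i (x k) - x k‖) / ‖T i (x k) - x k‖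
          else 0) • (T i (x k) - x k)))
    -- (i) interior condition
    (hint : (interior (⋂ i, {u | T i u = u}) ∩ Q).Nonempty)
    -- (ii) overrelaxations tend to zero, the series diverges
    (hr0 : Filter.Tendsto r Filter.atTop (nhds 0))
    (hdiv : Filter.Tendsto (fun n => ∑ k ∈ Finset.range n, α k * r k)
      Filter.atTop Filter.atTop)
    -- (iv) weights of violated constraints are bounded from below
    (lam0 : ℝ) (hlam0 : 0 < lam0)
    (hlamlb : ∀ i k u, i ∈ Ik k u → T i u ≠ u → lam0 ≤ lam i k u)
    -- (v) the control sequence is well matched with C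
    (hwm : ∀ u : H, u ∉ ⋂ i, {v | T i v = v} →
      {k : ℕ | ∃ i ∈ Ik k u, T i u ≠ u}.Infinite)
 :
    Bornology.IsBounded (Set.range x) ∧ ∃ k, x k ∈ (⋂ i, {u | T i u = u}) ∩ Q := by
  classical
  set C : Set H := ⋂ i, {u | T i u = u} with hCdef
  have hCmem : ∀ {u : H}, u ∈ C → ∀ i, T i u = u := by
    intro u hu i
    exact Set.mem_iInter.1 hu i
  have hCmem' : ∀ {u : H}, (∀ i, T i u = u) → u ∈ C := by
    intro u hu
    exact Set.mem_iInter.2 hu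
  obtain ⟨z, hzint, hzQ⟩ := hint
  obtain ⟨ε, hεpos, hballε⟩ := Metric.isOpen_iff.1 isOpen_interior z hzint
  set ρ : ℝ := ε / 2 with hρdef
  have hρpos : 0 < ρ := by positivity
  have hball : ∀ y ∈ Metric.closedBall z ρ, ∀ i, T i y = y := by
    intro y hy i
    have : y ∈ interior C := hballε (lt_of_le_of_lt (Metric.mem_closedBall.1 hy) (by simp [hρdef]; linarith))
    exact hCmem (interior_subset this) i
  have hzC : z ∈ C := interior_subset hzint
  -- projection facts
  have hproj : ∀ u, ∀ q ∈ Q, ⟪u - PQ u, q - PQ u⟫ ≤ 0 := by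
    have : Nonempty Q := ⟨⟨_, hPQmem 0⟩⟩
    intro u q hq
    have hmin : ‖u - PQ u‖ = ⨅ w : Q, ‖u - w‖ := by
      apply le_antisymm
      · apply le_ciInf
        intro w
        calc ‖u - PQ u‖ = ‖PQ u - u‖ := norm_sub_rev _ _
          _ ≤ ‖(w : H) - u‖ := hPQmin u w w.2
          _ = ‖u - w‖ := norm_sub_rev _ _
      · exact ciInf_le ⟨0, fun _ ⟨_, h⟩ => h ▸ norm_nonneg _⟩ (⟨PQ u, hPQmem u⟩ : Q)
    exact (norm_eq_iInf_iff_real_inner_le_zero hQconvex (hPQmem u)).1 hmin q hq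
  have hPQid : ∀ u ∈ Q, PQ u = u := by
    intro u hu
    have h := hPQmin u u hu
    rw [sub_self, norm_zero] at h
    have := norm_le_zero_iff.1 h
    exact sub_eq_zero.1 this
  have hcontract : ∀ u, ∀ q ∈ Q, ‖PQ u - q‖ ≤ ‖u - q‖ := by
    intro u q hq
    have h1 := hproj u q hq
    have expand : ‖u - q‖ ^ 2 = ‖u - PQ u‖ ^ 2 - 2 * ⟪u - PQ u, q - PQ u⟫ + ‖PQ u - q‖ ^ 2 := by
      have h3 : u - q = (u - PQ u) + (PQ u - q) := by abel
      rw [h3, norm_add_sq_real]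
      have h4 : (PQ u - q) = -(q - PQ u) := by abel
      rw [h4, inner_neg_right, norm_neg]
      ring
    have h2 : ‖PQ u - q‖ ^ 2 ≤ ‖u - q‖ ^ 2 := by nlinarith [norm_nonneg (u - PQ u)]
    exact (pow_le_pow_iff_left₀ (norm_nonneg _) (norm_nonneg _) two_ne_zero).1 h2
  have hxQ : ∀ k, x k ∈ Q := by
    intro k
    cases k with
    | zero => exact hx0
    | succ n => rw [hxrec n]; exact hPQmem _
  -- cutter geometry
  have hcut : ∀ i (u : H), T i u ≠ u →
      ‖T i u - u‖ * (‖T i u - u‖ + ρ) ≤ ⟪T i u - u, z - u⟫ := by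
    intro i u hne
    set v := T i u - u with hv
    have hd : 0 < ‖v‖ := by rw [norm_pos_iff]; exact sub_ne_zero.2 hne
    set z' := z - (ρ / ‖v‖) • v with hz'
    have hz'mem : z' ∈ Metric.closedBall z ρ := by
      rw [Metric.mem_closedBall, dist_eq_norm, hz']
      have h5 : z - (ρ / ‖v‖) • v - z = -((ρ / ‖v‖) • v) := by abel
      rw [h5, norm_neg, norm_smul, Real.norm_eq_abs, abs_of_nonneg (by positivity)]
      rw [div_mul_cancel₀ _ (ne_of_gt hd)]
    have h0 := hT i u z' (hball z' hz'mem i)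
    have he1 : u - T i u = -v := by rw [hv]; abel
    have he2 : z' - T i u = (z - u) - (ρ / ‖v‖) • v - v := by rw [hz', hv]; abel
    rw [he1, he2, inner_neg_left, inner_sub_right, inner_sub_right, real_inner_smul_right,
      real_inner_self_eq_norm_sq] at h0
    have hρv : ρ / ‖v‖ * ‖v‖ ^ 2 = ρ * ‖v‖ := by field_simp
    nlinarith [h0]
  -- per-step lemmas
  have hfixstep : ∀ k, (∀ i ∈ Ik k (x k), T i (x k) = x k) → x (k + 1) = x k := by
    intro k hall
    rw [hxrec k]
    have hsum0 : (∑ i ∈ Ik k (x k),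
        (lam i k (x k) *
          if T i (x k) ≠ x k then
            (r (cnt k) + ‖T i (x k) - x k‖) / ‖T i (x k) - x k‖
          else 0) • (T i (x k) - x k)) = 0 := by
      apply Finset.sum_eq_zero
      intro i hi
      simp [hall i hi]
    rw [hsum0, smul_zero, add_zero]
    exact hPQid _ (hxQ k)
  have hkey : ∀ k, (∃ i ∈ Ik k (x k), T i (x k) ≠ x k) →
      x (k + 1) ≠ x k ∧ (r (cnt k) ≤ ρ / 2 →
        ‖x (k + 1) - z‖ ^ 2 ≤ ‖x k - z‖ ^ 2 - α (cnt k) * (ρ * (lam0 * r (cnt k)))) := by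
    intro k hviol
    obtain ⟨i0, hi0S, hi0⟩ := hviol
    set w : H := ∑ i ∈ Ik k (x k),
      (lam i k (x k) * if T i (x k) ≠ x k then
        (r (cnt k) + ‖T i (x k) - x k‖) / ‖T i (x k) - x k‖ else 0) • (T i (x k) - x k)
      with hwdef
    obtain ⟨hpos, hdecr⟩ := stmt12_step T hT z (x k) ρ (r (cnt k)) (α (cnt k)) lam0 hρpos hball
      (hrpos _) (hα _).1 (hα _).2 hlam0 (Ik k (x k)) (fun i => lam i k (x k))
      (fun i _ => (hlam01 i k (x k)).1) (hlamsum k (x k))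
      (fun i hi hne => hlamlb i k (x k) hi hne) i0 hi0S hi0 w hwdef
    have hrec : x (k + 1) = PQ (x k + α (cnt k) • w) := by rw [hxrec k, hwdef]
    constructor
    · intro heq
      have h2 := hproj (x k + α (cnt k) • w) z hzQ
      rw [← hrec, heq] at h2
      have h3 : x k + α (cnt k) • w - x k = α (cnt k) • w := by abel
      rw [h3, real_inner_smul_left] at h2
      nlinarith [(hα (cnt k)).1]
    · intro hrle
      have hd := hdecr hrle
      have hc := hcontract (x k + α (cnt k) • w) z hzQ
      rw [← hrec] at hc
      have h4 : ‖x (k + 1) - z‖ ^ 2 ≤ ‖x k + α (cnt k) • w - z‖ ^ 2 :=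
        pow_le_pow_left₀ (norm_nonneg _) hc 2
      linarith
  -- counter facts
  have hcnt_succ : ∀ k, cnt (k + 1) = cnt k + (if x k ≠ x (k + 1) then 1 else 0) := by
    intro k
    by_cases h : x k ≠ x (k + 1) <;>
      simp [hcnt, Finset.range_add_one, Finset.filter_insert, h]
  have hcnt_mono : Monotone cnt := by
    apply monotone_nat_of_le_succ
    intro k
    rw [hcnt_succ k]
    split <;> omega
  -- main termination
  obtain ⟨m0, hm0⟩ : ∃ m0, ∀ m, m0 ≤ m → r m ≤ ρ / 2 := by
    obtain ⟨N, hN⟩ := Metric.tendsto_atTop.1 hr0 (ρ / 2) (half_pos hρpos)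
    refine ⟨N, fun m hm => ?_⟩
    have := hN m hm
    rw [Real.dist_eq, sub_zero] at this
    exact le_of_lt (lt_of_le_of_lt (le_abs_self _) this)
  have hterm : ∃ k, x k ∈ C ∩ Q := by
    by_contra hno
    push_neg at hno
    have hnc : ∀ k, x k ∉ C := fun k hk => hno k ⟨hk, hxQ k⟩
    -- Step A : cnt is unbounded
    have hunb : ∀ m, ∃ k, m ≤ cnt k := by
      by_contra hb
      push_neg at hb
      obtain ⟨m, hm⟩ := hb
      have hbdd : ∀ k, cnt k ≤ m := fun k => (hm k).le
      have hne : (Set.range cnt).Nonempty := ⟨cnt 0, 0, rfl⟩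
      have hbdd' : BddAbove (Set.range cnt) := ⟨m, by rintro _ ⟨k, rfl⟩; exact hbdd k⟩
      obtain ⟨K, hK⟩ : ∃ K, cnt K = sSup (Set.range cnt) := by
        have := Nat.sSup_mem hne hbdd'
        obtain ⟨K, hK⟩ := this
        exact ⟨K, hK⟩
      have hstay : ∀ k, K ≤ k → x k = x K := by
        intro k hk
        induction k, hk using Nat.le_induction with
        | base => rfl
        | succ k hk ih =>
          by_cases h : x k = x (k + 1)
          · rw [← h]; exact ih
          · exfalso
            have h1 : cnt (k + 1) = cnt k + 1 := by
              rw [hcnt_succ k, if_pos h]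
            have h2 : cnt k ≤ sSup (Set.range cnt) :=
              le_csSup hbdd' ⟨k, rfl⟩
            have h3 : cnt K ≤ cnt k := hcnt_mono hk
            have h4 : cnt (k + 1) ≤ sSup (Set.range cnt) :=
              le_csSup hbdd' ⟨k + 1, rfl⟩
            omega
      obtain ⟨k, hkmem, hkK⟩ : ∃ k, (∃ i ∈ Ik k (x K), T i (x K) ≠ x K) ∧ K ≤ k := by
        have hinf := hwm (x K) (hnc K)
        obtain ⟨k, hk1, hk2⟩ := hinf.exists_gt K
        exact ⟨k, hk1, hk2.le⟩
      have hxk : x k = x K := hstay k hkK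
      have hviol : ∃ i ∈ Ik k (x k), T i (x k) ≠ x k := by rw [hxk]; exact hkmem
      have := (hkey k hviol).1
      have h5 : x (k + 1) = x K := hstay (k + 1) (le_trans hkK (Nat.le_succ k))
      exact this (h5.trans hxk.symm)
    -- Step C : telescoping from K0
    obtain ⟨K0, hK0⟩ := hunb m0
    set m1 := cnt K0 with hm1def
    have main : ∀ k, K0 ≤ k →
        ‖x k - z‖ ^ 2 + ∑ m ∈ Finset.Ico m1 (cnt k), α m * (ρ * (lam0 * r m))
          ≤ ‖x K0 - z‖ ^ 2 := by
      intro k hk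
      induction k, hk using Nat.le_induction with
      | base => simp [hm1def]
      | succ k hk ih =>
        by_cases hmove : x k = x (k + 1)
        ·  have hceq : cnt (k + 1) = cnt k := by
             rw [hcnt_succ k, if_neg (by simpa using hmove)]
             omega
           rw [hceq, ← hmove]
           exact ih
        · have hv : ∃ i ∈ Ik k (x k), T i (x k) ≠ x k := by
            by_contra hvn
            push_neg at hvn
            exact hmove (hfixstep k hvn).symm
          have hcm : m1 ≤ cnt k := hcnt_mono hk
          have hrle : r (cnt k) ≤ ρ / 2 := hm0 _ (le_trans hK0 hcm)
          have hdec := (hkey k hv).2 hrle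
          have hceq : cnt (k + 1) = cnt k + 1 := by
            rw [hcnt_succ k, if_pos hmove]
          rw [hceq, Finset.sum_Ico_succ_top hcm]
          linarith
    -- Step D : contradiction with divergence
    have hposterm : ∀ m, 0 ≤ α m * (ρ * (lam0 * r m)) := by
      intro m
      have h1 := (hα m).1
      have h2 := hrpos m
      positivity
    set X : ℝ := (∑ j ∈ Finset.range m1, α j * r j) + (‖x K0 - z‖ ^ 2 + 1) / (ρ * lam0)
      with hXdef
    obtain ⟨N, hNX, hNm1⟩ :=
      ((hdiv.eventually_ge_atTop X).and (Filter.eventually_ge_atTop m1)).exists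
    obtain ⟨k', hk'⟩ := hunb N
    set k := max k' K0 with hkdef
    have hkK0 : K0 ≤ k := le_max_right _ _
    have hcntk : N ≤ cnt k := le_trans hk' (hcnt_mono (le_max_left _ _))
    have hsum1 : ∑ m ∈ Finset.Ico m1 N, α m * (ρ * (lam0 * r m))
        ≤ ∑ m ∈ Finset.Ico m1 (cnt k), α m * (ρ * (lam0 * r m)) := by
      apply Finset.sum_le_sum_of_subset_of_nonneg
        (Finset.Ico_subset_Ico le_rfl hcntk)
      intro m _ _
      exact hposterm m
    have hsum2 : ∑ m ∈ Finset.Ico m1 N, α m * (ρ * (lam0 * r m))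
        = ρ * lam0 * ((∑ j ∈ Finset.range N, α j * r j) - ∑ j ∈ Finset.range m1, α j * r j) := by
      rw [← Finset.sum_Ico_eq_sub _ hNm1, Finset.mul_sum]
      exact Finset.sum_congr rfl fun m _ => by ring
    have hρlam : 0 < ρ * lam0 := mul_pos hρpos hlam0
    have hsum3 : ‖x K0 - z‖ ^ 2 + 1 ≤ ∑ m ∈ Finset.Ico m1 N, α m * (ρ * (lam0 * r m)) := by
      rw [hsum2]
      have h6 : (‖x K0 - z‖ ^ 2 + 1) / (ρ * lam0) ≤
          (∑ j ∈ Finset.range N, α j * r j) - ∑ j ∈ Finset.range m1, α j * r j := by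
        rw [hXdef] at hNX
        linarith
      calc ‖x K0 - z‖ ^ 2 + 1 = ρ * lam0 * ((‖x K0 - z‖ ^ 2 + 1) / (ρ * lam0)) := by
            field_simp
        _ ≤ _ := by
            apply mul_le_mul_of_nonneg_left h6 hρlam.le
    have hmain := main k hkK0
    nlinarith [sq_nonneg ‖x k - z‖, hmain, hsum1, hsum3]
  obtain ⟨k1, hk1C, hk1Q⟩ := hterm
  have hconst : ∀ n, k1 ≤ n → x n = x k1 := by
    intro n hn
    induction n, hn using Nat.le_induction with
    | base => rfl
    | succ n hn ih =>
      have hCn : x n ∈ C := by rw [ih]; exact hk1C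
      have := hfixstep n (fun i _ => hCmem hCn i)
      rw [this, ih]
  constructor
  · have hsub : Set.range x ⊆ x '' Set.Iic k1 := by
      rintro _ ⟨n, rfl⟩
      rcases le_or_gt n k1 with h | h
      · exact ⟨n, Set.mem_Iic.2 h, rfl⟩
      · exact ⟨k1, Set.mem_Iic.2 le_rfl, (hconst n h.le).symm⟩
    exact (((Set.finite_Iic k1).image x).isBounded).subset hsub
  · exact ⟨k1, hk1C, hk1Q⟩
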